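/- Let f : ℝⁿ → ℝ be a convex, continuously differentiable function whose gradient ∇f is Lipschitz continuous with constant L_f > 0, let 𝔠 = {x ∈ ℝⁿ : f(x) ≤ 0}, and suppose there exists x̂ ∈ ℝⁿ with f(x̂) < 0 (Slater's condition). Then for every x ∈ 𝔠, one has (1/L_f²)‖∇f(x)‖² − (2/L_f)f(x) > 0; equivalently, the radius r = √((1/L_f²)‖∇f(x)‖² − (2/L_f)f(x)) of the moving ball 𝔅(x) is strictly positive, so Slater's condition holds for 𝔅(x). -/

import Mathlib

/-- Lemma 2.3 (3) / Remark (c): under Slater's condition, for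
every x ∈ 𝔠 the squared radius (1/L_f²)‖∇f(x)‖² − (2/L_f)f(x) of the moving
ball 𝔅(x) is strictly positive, hence r = √(…) > 0 and Slater's condition
holds for 𝔅(x). -/
theorem stmt_13 {n : ℕ} (f : EuclideanSpace ℝ (Fin n) → ℝ)
    (hconv : ConvexOn ℝ Set.univ f) (hf : ContDiff ℝ 1 f)
    (Lf : ℝ) (hLf : 0 < Lf)
    (hlip : ∀ a b : EuclideanSpace ℝ (Fin n),
      ‖gradient f a - gradient f b‖ ≤ Lf * ‖a - b‖)
    (C : Set (EuclideanSpace ℝ (Fin n)))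
    (hC : C = {z : EuclideanSpace ℝ (Fin n) | f z ≤ 0})
    (hslater : ∃ xhat : EuclideanSpace ℝ (Fin n), f xhat < 0)
    (x : EuclideanSpace ℝ (Fin n)) (hx : x ∈ C) :
    0 < (1 / Lf ^ 2) * ‖gradient f x‖ ^ 2 - (2 / Lf) * f x ∧
    0 < Real.sqrt ((1 / Lf ^ 2) * ‖gradient f x‖ ^ 2 - (2 / Lf) * f x) := by
  subst hC
  obtain ⟨xh, hxh⟩ := hslater
  have hfx : f x ≤ 0 := hx
  have key : 0 < (1 / Lf ^ 2) * ‖gradient f x‖ ^ 2 - (2 / Lf) * f x := by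
    rcases lt_or_eq_of_le hfx with h | h
    · have h1 : 0 ≤ (1 / Lf ^ 2) * ‖gradient f x‖ ^ 2 := by positivity
      have h2 : 0 < -((2 / Lf) * f x) := by
        have : 0 < 2 / Lf := by positivity
        nlinarith
      linarith
    · -- f x = 0; show gradient nonzero
      have hdiff : DifferentiableAt ℝ f x := (hf.differentiable one_ne_zero) x
      have hgrad : HasGradientAt f (gradient f x) x := hdiff.hasGradientAt
      have hF : HasFDerivAt f (InnerProductSpace.toDual ℝ _ (gradient f x)) x :=
        hgrad.hasFDerivAt
      set v := xh - x with hv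
      -- line map
      have hline : ∀ t : ℝ, HasDerivAt (fun t : ℝ => x + t • v) v t := by
        intro t
        simpa using ((hasDerivAt_id t).smul_const v).const_add x
      have hg : HasDerivAt (fun t : ℝ => f (x + t • v)) (inner ℝ (gradient f x) v) 0 := by
        have hF0 : HasFDerivAt f (InnerProductSpace.toDual ℝ _ (gradient f x))
            ((fun t : ℝ => x + t • v) 0) := by simpa using hF
        have := hF0.comp_hasDerivAt 0 (hline 0)
        rw [InnerProductSpace.toDual_apply_apply] at this
        exact this
      have hgconv : ConvexOn ℝ Set.univ (fun t : ℝ => f (x + t • v)) := by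
        have := hconv.comp_affineMap (AffineMap.lineMap x xh)
        have heq : (fun t : ℝ => f (x + t • v)) = f ∘ (AffineMap.lineMap x xh) := by
          funext t; simp [AffineMap.lineMap_apply, hv, add_comm]
        rw [heq]
        simpa using this
      have hsl := hgconv.le_slope_of_hasDerivAt (Set.mem_univ 0) (Set.mem_univ 1)
        zero_lt_one hg
      have hs : slope (fun t : ℝ => f (x + t • v)) 0 1 = f xh - f x := by
        simp [slope, hv]
      rw [hs] at hsl
      have hneg : inner ℝ (gradient f x) v < (0:ℝ) := by
        rw [← h] at hxh ⊢
        linarith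
      have hgne : gradient f x ≠ 0 := by
        intro h0
        rw [h0] at hneg
        simp at hneg
      have : 0 < ‖gradient f x‖ := norm_pos_iff.mpr hgne
      have hz : (2 / Lf) * f x = 0 := by rw [h]; ring
      have hp : 0 < (1 / Lf ^ 2) * ‖gradient f x‖ ^ 2 := by positivity
      linarith
  exact ⟨key, Real.sqrt_pos.mpr key⟩
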